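/- Let y^u: R^{n_u} → R^{n_s} satisfy the equivariance relation e^{tA_s} y^u(x) = y^u(e^{tA_u}x) for all t ≥ 0 and all x with ‖e^{sA_u}x‖ ≥ ρ for s ∈ [0,t], together with ‖y^u(x)‖ ≤ Lρ whenever ‖x‖ = ρ. Assume μ_log(A_s) < 0 < m_l(A_u) ≤ μ_log(A_u). Then for all x with ‖x‖ ≥ ρ: ‖y^u(x)‖ ≤ Lρ·(‖x‖/ρ)^{μ_log(A_s)/μ_log(A_u)}. -/

import Mathlib

open NormedSpace
open scoped RealInnerProductSpace

set_option synthInstance.maxHeartbeats 1000000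
set_option maxHeartbeats 1000000

/-- Minimal logarithmic norm `m_l(A) = min_{‖v‖=1} (Av, v)`. -/
noncomputable def minLogNorm {n : ℕ}
    (A : EuclideanSpace ℝ (Fin n) →L[ℝ] EuclideanSpace ℝ (Fin n)) : ℝ :=
  sInf {r : ℝ | ∃ v : EuclideanSpace ℝ (Fin n), ‖v‖ = 1 ∧ r = (inner ℝ (A v) v : ℝ)}

/-- Logarithmic norm `μ_log(A) = max_{‖v‖=1} (Av, v)`. -/
noncomputable def logNorm {n : ℕ}
    (A : EuclideanSpace ℝ (Fin n) →L[ℝ] EuclideanSpace ℝ (Fin n)) : ℝ :=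
  sSup {r : ℝ | ∃ v : EuclideanSpace ℝ (Fin n), ‖v‖ = 1 ∧ r = (inner ℝ (A v) v : ℝ)}

section Helpers

variable {n : ℕ}

lemma inner_le_logNorm (A : EuclideanSpace ℝ (Fin n) →L[ℝ] EuclideanSpace ℝ (Fin n))
    (u : EuclideanSpace ℝ (Fin n)) : ⟪A u, u⟫ ≤ logNorm A * ‖u‖ ^ 2 := by
  rcases eq_or_ne u 0 with rfl | hu
  · simp
  · have hnorm : (0:ℝ) < ‖u‖ := norm_pos_iff.2 hu
    set w : EuclideanSpace ℝ (Fin n) := ‖u‖⁻¹ • u with hw_def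
    have hw : ‖w‖ = 1 := by
      rw [hw_def, norm_smul, norm_inv, norm_norm, inv_mul_cancel₀ hnorm.ne']
    have hbdd : BddAbove {r : ℝ | ∃ v : EuclideanSpace ℝ (Fin n), ‖v‖ = 1 ∧ r = (inner ℝ (A v) v : ℝ)} := by
      refine ⟨‖A‖, ?_⟩
      rintro r ⟨v, hv, rfl⟩
      calc ⟪A v, v⟫ ≤ ‖A v‖ * ‖v‖ := real_inner_le_norm _ _
        _ ≤ ‖A‖ * ‖v‖ * ‖v‖ := by
            have := A.le_opNorm v
            nlinarith [norm_nonneg v]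
        _ = ‖A‖ := by rw [hv]; ring
    have h1 : ⟪A w, w⟫ ≤ logNorm A := le_csSup hbdd ⟨w, hw, rfl⟩
    have h2 : ⟪A w, w⟫ = ‖u‖⁻¹ * (‖u‖⁻¹ * ⟪A u, u⟫) := by
      rw [hw_def, map_smul, real_inner_smul_left, real_inner_smul_right]
    rw [h2] at h1
    have h3 := mul_le_mul_of_nonneg_left h1 (le_of_lt (mul_pos hnorm hnorm))
    calc ⟪A u, u⟫ = ‖u‖ * ‖u‖ * (‖u‖⁻¹ * (‖u‖⁻¹ * ⟪A u, u⟫)) := by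
          field_simp
        _ ≤ ‖u‖ * ‖u‖ * logNorm A := h3
        _ = logNorm A * ‖u‖ ^ 2 := by ring

lemma minLogNorm_le_inner (A : EuclideanSpace ℝ (Fin n) →L[ℝ] EuclideanSpace ℝ (Fin n))
    (u : EuclideanSpace ℝ (Fin n)) (hu : u ≠ 0) : minLogNorm A * ‖u‖ ^ 2 ≤ ⟪A u, u⟫ := by
  have hnorm : (0:ℝ) < ‖u‖ := norm_pos_iff.2 hu
  set w : EuclideanSpace ℝ (Fin n) := ‖u‖⁻¹ • u with hw_def
  have hw : ‖w‖ = 1 := by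
    rw [hw_def, norm_smul, norm_inv, norm_norm, inv_mul_cancel₀ hnorm.ne']
  have hbdd : BddBelow {r : ℝ | ∃ v : EuclideanSpace ℝ (Fin n), ‖v‖ = 1 ∧ r = (inner ℝ (A v) v : ℝ)} := by
    refine ⟨-‖A‖, ?_⟩
    rintro r ⟨v, hv, rfl⟩
    have h1 : |⟪A v, v⟫| ≤ ‖A v‖ * ‖v‖ := abs_real_inner_le_norm _ _
    have h2 := A.le_opNorm v
    rw [hv] at h1 h2
    simp only [mul_one] at h1 h2
    linarith [neg_abs_le (⟪A v, v⟫)]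
  have h1 : minLogNorm A ≤ ⟪A w, w⟫ := csInf_le hbdd ⟨w, hw, rfl⟩
  have h2 : ⟪A w, w⟫ = ‖u‖⁻¹ * (‖u‖⁻¹ * ⟪A u, u⟫) := by
    rw [hw_def, map_smul, real_inner_smul_left, real_inner_smul_right]
  rw [h2] at h1
  have h3 := mul_le_mul_of_nonneg_left h1 (le_of_lt (mul_pos hnorm hnorm))
  calc minLogNorm A * ‖u‖ ^ 2 = ‖u‖ * ‖u‖ * minLogNorm A := by ring
    _ ≤ ‖u‖ * ‖u‖ * (‖u‖⁻¹ * (‖u‖⁻¹ * ⟪A u, u⟫)) := h3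
    _ = ⟪A u, u⟫ := by field_simp

lemma hasDerivAt_exp_apply (A : EuclideanSpace ℝ (Fin n) →L[ℝ] EuclideanSpace ℝ (Fin n))
    (v : EuclideanSpace ℝ (Fin n)) (s : ℝ) :
    HasDerivAt (fun t : ℝ => exp (t • A) v) (A (exp (s • A) v)) s := by
  have h := hasDerivAt_exp_smul_const' (𝕂 := ℝ) A s
  have h2 := ((ContinuousLinearMap.apply ℝ (EuclideanSpace ℝ (Fin n)) v).hasFDerivAt).comp_hasDerivAt s h
  exact h2

lemma hasDerivAt_aux (A : EuclideanSpace ℝ (Fin n) →L[ℝ] EuclideanSpace ℝ (Fin n))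
    (v : EuclideanSpace ℝ (Fin n)) (s : ℝ) (c : ℝ) :
    HasDerivAt (fun t : ℝ => Real.exp (c * t) * ‖exp (t • A) v‖ ^ 2)
      (c * Real.exp (c * s) * ‖exp (s • A) v‖ ^ 2
        + Real.exp (c * s) * (2 * ⟪A (exp (s • A) v), exp (s • A) v⟫)) s := by
  have hd := hasDerivAt_exp_apply A v s
  have hsq : HasDerivAt (fun t : ℝ => ‖exp (t • A) v‖ ^ 2)
      (2 * ⟪A (exp (s • A) v), exp (s • A) v⟫) s := by
    have h := hd.inner ℝ hd
    have heq : (fun t : ℝ => (inner ℝ (exp (t • A) v) (exp (t • A) v) : ℝ))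
        = fun t : ℝ => ‖exp (t • A) v‖ ^ 2 := by
      funext t; rw [real_inner_self_eq_norm_sq]
    rw [heq] at h
    exact h.congr_deriv (by rw [real_inner_comm]; ring)
  have hexp : HasDerivAt (fun t : ℝ => Real.exp (c * t)) (c * Real.exp (c * s)) s := by
    have h1 : HasDerivAt (fun t : ℝ => c * t) c s := by
      simpa using (hasDerivAt_id s).const_mul c
    have h3 := (Real.hasDerivAt_exp (c * s)).comp s h1
    rw [mul_comm (Real.exp _) c] at h3
    exact h3
  exact hexp.mul hsq

lemma exp_zero_apply (A : EuclideanSpace ℝ (Fin n) →L[ℝ] EuclideanSpace ℝ (Fin n))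
    (v : EuclideanSpace ℝ (Fin n)) : exp ((0:ℝ) • A) v = v := by
  have h : (0:ℝ) • A = 0 := zero_smul ℝ A
  rw [h, exp_zero, ContinuousLinearMap.one_apply]

lemma norm_exp_apply_le (A : EuclideanSpace ℝ (Fin n) →L[ℝ] EuclideanSpace ℝ (Fin n))
    {t : ℝ} (ht : 0 ≤ t) (v : EuclideanSpace ℝ (Fin n)) :
    ‖exp (t • A) v‖ ≤ Real.exp (logNorm A * t) * ‖v‖ := by
  set M := logNorm A with hM
  set g : ℝ → ℝ := fun t => Real.exp (-(2 * M) * t) * ‖exp (t • A) v‖ ^ 2 with hg_def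
  have hanti : Antitone g := by
    apply antitone_of_deriv_nonpos
    · intro s; exact (hasDerivAt_aux A v s (-(2 * M))).differentiableAt
    · intro s
      rw [(hasDerivAt_aux A v s (-(2 * M))).deriv]
      have h1 := inner_le_logNorm A (exp (s • A) v)
      nlinarith [Real.exp_pos (-(2 * M) * s), sq_nonneg ‖exp (s • A) v‖]
  have h0 : g t ≤ g 0 := hanti ht
  have hg0 : g 0 = ‖v‖ ^ 2 := by simp [hg_def, exp_zero_apply]
  rw [hg0] at h0
  have hkey : ‖exp (t • A) v‖ ^ 2 ≤ (Real.exp (M * t) * ‖v‖) ^ 2 := by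
    have h5 : Real.exp (M * t) ^ 2 * Real.exp (-(2 * M) * t) = 1 := by
      rw [sq, ← Real.exp_add, ← Real.exp_add]
      have : M * t + M * t + -(2 * M) * t = 0 := by ring
      rw [this, Real.exp_zero]
    have h4 := mul_le_mul_of_nonneg_left h0 (sq_nonneg (Real.exp (M * t)))
    calc ‖exp (t • A) v‖ ^ 2
        = (Real.exp (M * t) ^ 2 * Real.exp (-(2 * M) * t)) * ‖exp (t • A) v‖ ^ 2 := by
          rw [h5, one_mul]
      _ = Real.exp (M * t) ^ 2 * (Real.exp (-(2 * M) * t) * ‖exp (t • A) v‖ ^ 2) := by ring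
      _ ≤ Real.exp (M * t) ^ 2 * ‖v‖ ^ 2 := h4
      _ = (Real.exp (M * t) * ‖v‖) ^ 2 := by ring
  have := Real.sqrt_le_sqrt hkey
  rwa [Real.sqrt_sq (norm_nonneg _),
    Real.sqrt_sq (by positivity : (0:ℝ) ≤ Real.exp (M * t) * ‖v‖)] at this

lemma le_norm_exp_apply (A : EuclideanSpace ℝ (Fin n) →L[ℝ] EuclideanSpace ℝ (Fin n))
    {t : ℝ} (ht : 0 ≤ t) (v : EuclideanSpace ℝ (Fin n)) :
    Real.exp (minLogNorm A * t) * ‖v‖ ≤ ‖exp (t • A) v‖ := by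
  rcases eq_or_ne v 0 with rfl | hv
  · simp
  have hvne : ∀ s : ℝ, exp (s • A) v ≠ 0 := by
    intro s hzero
    have : exp ((-s) • A) (exp (s • A) v) = v := by
      have hcomm : Commute ((-s) • A) (s • A) := by
        ext w
        simp only [ContinuousLinearMap.mul_apply, ContinuousLinearMap.smul_apply, map_smul]
        rw [smul_comm]
      let +nondep : NormedAlgebra ℚ (EuclideanSpace ℝ (Fin n) →L[ℝ] EuclideanSpace ℝ (Fin n)) := .restrictScalars ℚ ℝ _
      rw [← ContinuousLinearMap.comp_apply, ← ContinuousLinearMap.mul_def,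
        ← exp_add_of_commute hcomm]
      have h6 : (-s) • A + s • A = 0 := by module
      rw [h6, exp_zero, ContinuousLinearMap.one_apply]
    rw [hzero, map_zero] at this
    exact hv this.symm
  set m := minLogNorm A with hm
  set g : ℝ → ℝ := fun t => Real.exp (-(2 * m) * t) * ‖exp (t • A) v‖ ^ 2 with hg_def
  have hmono : Monotone g := by
    apply monotone_of_deriv_nonneg
    · intro s; exact (hasDerivAt_aux A v s (-(2 * m))).differentiableAt
    · intro s
      rw [(hasDerivAt_aux A v s (-(2 * m))).deriv]
      have h1 := minLogNorm_le_inner A (exp (s • A) v) (hvne s)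
      nlinarith [Real.exp_pos (-(2 * m) * s), sq_nonneg ‖exp (s • A) v‖]
  have h0 : g 0 ≤ g t := hmono ht
  have hg0 : g 0 = ‖v‖ ^ 2 := by simp [hg_def, exp_zero_apply]
  rw [hg0] at h0
  have hkey : (Real.exp (m * t) * ‖v‖) ^ 2 ≤ ‖exp (t • A) v‖ ^ 2 := by
    have h5 : Real.exp (m * t) ^ 2 * Real.exp (-(2 * m) * t) = 1 := by
      rw [sq, ← Real.exp_add, ← Real.exp_add]
      have : m * t + m * t + -(2 * m) * t = 0 := by ring
      rw [this, Real.exp_zero]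
    have h4 := mul_le_mul_of_nonneg_left h0 (sq_nonneg (Real.exp (m * t)))
    calc (Real.exp (m * t) * ‖v‖) ^ 2 = Real.exp (m * t) ^ 2 * ‖v‖ ^ 2 := by ring
      _ ≤ Real.exp (m * t) ^ 2 * (Real.exp (-(2 * m) * t) * ‖exp (t • A) v‖ ^ 2) := h4
      _ = (Real.exp (m * t) ^ 2 * Real.exp (-(2 * m) * t)) * ‖exp (t • A) v‖ ^ 2 := by ring
      _ = ‖exp (t • A) v‖ ^ 2 := by rw [h5, one_mul]
  have := Real.sqrt_le_sqrt hkey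
  rwa [Real.sqrt_sq (norm_nonneg _),
    Real.sqrt_sq (by positivity : (0:ℝ) ≤ Real.exp (m * t) * ‖v‖)] at this

lemma exp_smul_mul (A : EuclideanSpace ℝ (Fin n) →L[ℝ] EuclideanSpace ℝ (Fin n))
    (a b : ℝ) : exp ((a + b) • A) = exp (a • A) * exp (b • A) := by
  have hcomm : Commute (a • A) (b • A) := by
    ext w
    simp only [ContinuousLinearMap.mul_apply, ContinuousLinearMap.smul_apply, map_smul]
    rw [smul_comm]
  have h : (a + b) • A = a • A + b • A := add_smul a b A
  rw [h]
  let +nondep : NormedAlgebra ℚ (EuclideanSpace ℝ (Fin n) →L[ℝ] EuclideanSpace ℝ (Fin n)) := .restrictScalars ℚ ℝ _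
  exact exp_add_of_commute hcomm

end Helpers

lemma exp_apply_exp (A : EuclideanSpace ℝ (Fin n) →L[ℝ] EuclideanSpace ℝ (Fin n))
    (a b : ℝ) (x : EuclideanSpace ℝ (Fin n)) :
    exp (a • A) (exp (b • A) x) = exp ((a + b) • A) x := by
  rw [exp_smul_mul, ContinuousLinearMap.mul_apply]

lemma exp_apply_exp_neg (A : EuclideanSpace ℝ (Fin n) →L[ℝ] EuclideanSpace ℝ (Fin n))
    (s : ℝ) (x : EuclideanSpace ℝ (Fin n)) :
    exp (s • A) (exp ((-s) • A) x) = x := by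
  rw [exp_apply_exp]
  have h : s + -s = (0:ℝ) := by ring
  rw [h, exp_zero_apply]

theorem stmt_13 (nu ns : ℕ) (L ρ : ℝ) (hL : 0 < L) (hρ : 0 < ρ)
    (Au : EuclideanSpace ℝ (Fin nu) →L[ℝ] EuclideanSpace ℝ (Fin nu))
    (As : EuclideanSpace ℝ (Fin ns) →L[ℝ] EuclideanSpace ℝ (Fin ns))
    (hAs : logNorm As < 0) (hAu : 0 < minLogNorm Au)
    (hAu2 : minLogNorm Au ≤ logNorm Au)
    (yu : EuclideanSpace ℝ (Fin nu) → EuclideanSpace ℝ (Fin ns))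
    (hequiv : ∀ t : ℝ, 0 ≤ t → ∀ x : EuclideanSpace ℝ (Fin nu),
      (∀ s ∈ Set.Icc 0 t, ρ ≤ ‖(exp (s • Au)) x‖) →
      (exp (t • As)) (yu x) = yu ((exp (t • Au)) x))
    (hbnd : ∀ x : EuclideanSpace ℝ (Fin nu), ‖x‖ = ρ → ‖yu x‖ ≤ L * ρ) :
    ∀ x : EuclideanSpace ℝ (Fin nu), ρ ≤ ‖x‖ →
      ‖yu x‖ ≤ L * ρ * (‖x‖ / ρ) ^ (logNorm As / logNorm Au) := by
  intro x hx
  have hMu : 0 < logNorm Au := lt_of_lt_of_le hAu hAu2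
  have hxpos : 0 < ‖x‖ := lt_of_lt_of_le hρ hx
  set m := minLogNorm Au with hm
  set f : ℝ → ℝ := fun s => ‖exp ((-s) • Au) x‖ with hf_def
  have hf : Continuous f := by
    have h1 : Continuous fun s : ℝ => (-s) • Au := by continuity
    let +nondep : NormedAlgebra ℚ (EuclideanSpace ℝ (Fin nu) →L[ℝ] EuclideanSpace ℝ (Fin nu)) := .restrictScalars ℚ ℝ _
    have h2 : Continuous fun s : ℝ => exp ((-s) • Au) := exp_continuous.comp h1
    exact ((ContinuousLinearMap.apply ℝ (EuclideanSpace ℝ (Fin nu)) x).continuous.comp h2).norm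
  have hf0 : f 0 = ‖x‖ := by
    show ‖exp ((-(0:ℝ)) • Au) x‖ = ‖x‖
    rw [neg_zero, exp_zero_apply]
  have hfs : ∀ s : ℝ, 0 ≤ s → Real.exp (m * s) * f s ≤ ‖x‖ := by
    intro s hs
    have h1 := le_norm_exp_apply Au hs (exp ((-s) • Au) x)
    rwa [exp_apply_exp_neg] at h1
  set s1 : ℝ := max 0 (m⁻¹ * Real.log (‖x‖ / ρ)) with hs1_def
  have hs1 : 0 ≤ s1 := le_max_left _ _
  have hfs1 : f s1 ≤ ρ := by
    have hlog : Real.log (‖x‖ / ρ) ≤ m * s1 := by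
      have h1 : m⁻¹ * Real.log (‖x‖ / ρ) ≤ s1 := le_max_right _ _
      have h2 := mul_le_mul_of_nonneg_left h1 (le_of_lt hAu)
      rwa [← mul_assoc, mul_inv_cancel₀ hAu.ne', one_mul] at h2
    have hxρ : ‖x‖ ≤ Real.exp (m * s1) * ρ := by
      have h2 : ‖x‖ / ρ ≤ Real.exp (m * s1) := by
        rw [← Real.exp_log (div_pos hxpos hρ)]
        exact Real.exp_le_exp.2 hlog
      calc ‖x‖ = ‖x‖ / ρ * ρ := by field_simp
        _ ≤ Real.exp (m * s1) * ρ := mul_le_mul_of_nonneg_right h2 hρ.le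
    have h3 := (hfs s1 hs1).trans hxρ
    exact le_of_mul_le_mul_left h3 (Real.exp_pos _)
  set Sset : Set ℝ := Set.Icc 0 s1 ∩ {s | f s ≤ ρ} with hS_def
  have hne : Sset.Nonempty := ⟨s1, ⟨hs1, le_refl _⟩, hfs1⟩
  have hclosed : IsClosed Sset := isClosed_Icc.inter (isClosed_le hf continuous_const)
  have hbdd : BddBelow Sset := ⟨0, fun y hy => hy.1.1⟩
  set T : ℝ := sInf Sset with hT_def
  have hT_mem : T ∈ Sset := hclosed.csInf_mem hne hbdd
  have hT0 : 0 ≤ T := hT_mem.1.1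
  have hlow : ∀ u : ℝ, 0 ≤ u → u < T → ρ < f u := by
    intro u h1 h2
    by_contra h
    push_neg at h
    have hmem : u ∈ Sset := ⟨⟨h1, h2.le.trans hT_mem.1.2⟩, h⟩
    exact absurd (csInf_le hbdd hmem) (not_le.2 h2)
  have hfT : f T = ρ := by
    refine le_antisymm hT_mem.2 ?_
    rcases eq_or_lt_of_le hT0 with hT | hT
    · rw [← hT, hf0]; exact hx
    · have hev : ∀ᶠ u in nhdsWithin T (Set.Iio T), ρ ≤ f u := by
        filter_upwards [Ico_mem_nhdsLT_of_mem (⟨hT, le_refl T⟩ : T ∈ Set.Ioc 0 T)] with u hu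
        exact (hlow u hu.1 hu.2).le
      exact ge_of_tendsto (hf.continuousAt.tendsto.mono_left nhdsWithin_le_nhds) hev
  set x0 : EuclideanSpace ℝ (Fin nu) := exp ((-T) • Au) x with hx0_def
  have hx0 : ‖x0‖ = ρ := hfT
  have hflow : exp (T • Au) x0 = x := exp_apply_exp_neg Au T x
  have hcond : ∀ s ∈ Set.Icc (0:ℝ) T, ρ ≤ ‖exp (s • Au) x0‖ := by
    intro s hs
    have h8 : s + -T = -(T - s) := by ring
    have heq2 : exp (s • Au) x0 = exp ((-(T - s)) • Au) x := by
      rw [hx0_def, exp_apply_exp, h8]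
    rw [heq2]
    have h9 : T - s ≤ T := by linarith [hs.1]
    rcases lt_or_eq_of_le h9 with h | h
    · exact (hlow _ (by linarith [hs.2]) h).le
    · show ρ ≤ f (T - s)
      rw [h, hfT]
  have heq := hequiv T hT0 x0 hcond
  rw [hflow] at heq
  have hb1 : ‖yu x‖ ≤ Real.exp (logNorm As * T) * (L * ρ) := by
    have h1 := norm_exp_apply_le As hT0 (yu x0)
    rw [heq] at h1
    calc ‖yu x‖ ≤ Real.exp (logNorm As * T) * ‖yu x0‖ := h1
      _ ≤ Real.exp (logNorm As * T) * (L * ρ) :=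
          mul_le_mul_of_nonneg_left (hbnd x0 hx0) (Real.exp_pos _).le
  have hTlog : Real.log (‖x‖ / ρ) ≤ logNorm Au * T := by
    have h1 := norm_exp_apply_le Au hT0 x0
    rw [hflow, hx0] at h1
    have h2 : ‖x‖ / ρ ≤ Real.exp (logNorm Au * T) := by
      rw [div_le_iff₀ hρ]
      exact h1
    exact (Real.log_le_iff_le_exp (div_pos hxpos hρ)).2 h2
  have hexp_le : logNorm As * T ≤ logNorm As / logNorm Au * Real.log (‖x‖ / ρ) := by
    have hT_ge : Real.log (‖x‖ / ρ) / logNorm Au ≤ T := by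
      rw [div_le_iff₀ hMu]
      rw [mul_comm] at hTlog
      exact hTlog
    have h9 : logNorm As * T ≤ logNorm As * (Real.log (‖x‖ / ρ) / logNorm Au) := by
      exact mul_le_mul_of_nonpos_left hT_ge hAs.le
    calc logNorm As * T ≤ logNorm As * (Real.log (‖x‖ / ρ) / logNorm Au) := h9
      _ = logNorm As / logNorm Au * Real.log (‖x‖ / ρ) := by ring
  have hrpow : (‖x‖ / ρ) ^ (logNorm As / logNorm Au)
      = Real.exp (logNorm As / logNorm Au * Real.log (‖x‖ / ρ)) := by
    rw [Real.rpow_def_of_pos (div_pos hxpos hρ), mul_comm]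
  calc ‖yu x‖ ≤ Real.exp (logNorm As * T) * (L * ρ) := hb1
    _ ≤ Real.exp (logNorm As / logNorm Au * Real.log (‖x‖ / ρ)) * (L * ρ) :=
        mul_le_mul_of_nonneg_right (Real.exp_le_exp.2 hexp_le) (by positivity)
    _ = L * ρ * (‖x‖ / ρ) ^ (logNorm As / logNorm Au) := by
        rw [hrpow]; ring
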